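/- Let f : ℤ → ℂ be q-periodic with ∑_{r=1}^{q} f(r) = 0, and let g(s) = (1/q) ∑_{r=1}^{q} f(r) e^{-2πi r s/q} be its Fourier transform (so g(q) = g(0) = 0). Then ∑_{n=1}^∞ f(n)/n converges and equals -∑_{s=1}^{q-1} g(s) log(1 - e^{2πi s/q}). In particular L(1,f) = 0 if and only if ∑_{s=1}^{q-1} g(s) log(1 - e^{2πi s/q}) = 0. -/

import Mathlib

open Filter Topology Complex Finset

lemma tendsto_log_series {z : ℂ} (hz : ‖z‖ = 1) (hz1 : z ≠ 1) :
    Tendsto (fun N : ℕ => ∑ n ∈ range N, z ^ (n + 1) / (n + 1)) atTop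
      (𝓝 (-Complex.log (1 - z))) := by
  have hz1' : z - 1 ≠ 0 := sub_ne_zero.mpr hz1
  -- partial sums of z^(i+1) are bounded
  have hb : ∀ n : ℕ, ‖∑ i ∈ range n, z ^ (i + 1)‖ ≤ 2 / ‖z - 1‖ := by
    intro n
    have h1 : ∑ i ∈ range n, z ^ (i + 1) = (z ^ n - 1) / (z - 1) * z := by
      rw [← geom_sum_eq hz1, Finset.sum_mul]
      exact Finset.sum_congr rfl fun i _ => (pow_succ z i).symm
    rw [h1, norm_mul, hz, mul_one, norm_div]
    gcongr
    calc ‖z ^ n - 1‖ ≤ ‖z ^ n‖ + ‖(1:ℂ)‖ := norm_sub_le _ _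
      _ = 2 := by rw [norm_pow, hz]; norm_num
  -- Cauchy sequence via Dirichlet's test
  have hc : CauchySeq (fun N : ℕ => ∑ n ∈ range N, z ^ (n + 1) / (n + 1)) := by
    have ha : Antitone (fun n : ℕ => ((n : ℝ) + 1)⁻¹) := by
      intro a b h
      have h1 : (0:ℝ) < (a:ℝ) + 1 := by positivity
      have h2 : (a:ℝ) + 1 ≤ (b:ℝ) + 1 := by have := (Nat.cast_le (α := ℝ)).mpr h; linarith
      exact inv_anti₀ h1 h2
    have h0 : Tendsto (fun n : ℕ => ((n : ℝ) + 1)⁻¹) atTop (𝓝 0) := by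
      simpa [one_div] using tendsto_one_div_add_atTop_nhds_zero_nat (𝕜 := ℝ)
    have := ha.cauchySeq_series_mul_of_tendsto_zero_of_bounded h0 hb
    convert this using 2 with N
    refine Finset.sum_congr rfl fun n _ => ?_
    rw [Complex.real_smul]
    push_cast
    rw [div_eq_inv_mul]
  obtain ⟨l, hl⟩ := cauchySeq_tendsto_of_complete hc
  -- partial sums of a n = z^n/n tend to l
  have hl' : Tendsto (fun N : ℕ => ∑ n ∈ range N, z ^ n / n) atTop (𝓝 l) := by
    rw [← tendsto_add_atTop_iff_nat 1]
    convert hl using 2 with N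
    rw [Finset.sum_range_succ']
    simp
  -- Abel's limit theorem
  have habel := Complex.tendsto_tsum_powerSeries_nhdsWithin_lt hl'
  have hne : ((𝓝[<] (1:ℝ)).map Complex.ofReal).NeBot := Filter.map_neBot
  -- the function equals -log(1 - x z) for x near 1 from below
  have key : Tendsto (fun w : ℂ => ∑' n : ℕ, z ^ n / n * w ^ n) ((𝓝[<] (1:ℝ)).map Complex.ofReal)
      (𝓝 (-Complex.log (1 - z))) := by
    rw [Filter.tendsto_map'_iff]
    have heq : (fun x : ℝ => -Complex.log (1 - x * z))
        =ᶠ[𝓝[<] (1:ℝ)] (fun x : ℝ => ∑' n : ℕ, z ^ n / n * (x:ℂ) ^ n) := by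
      filter_upwards [Ioo_mem_nhdsLT_of_mem (by norm_num : (1:ℝ) ∈ Set.Ioc 0 1)] with x hx
      have hxz : ‖(x:ℂ) * z‖ < 1 := by
        rw [norm_mul, hz, mul_one, Complex.norm_real, Real.norm_eq_abs, abs_of_pos hx.1]; exact hx.2
      have := Complex.hasSum_taylorSeries_neg_log hxz
      rw [← this.tsum_eq]
      refine (tsum_congr fun n => ?_).symm
      rw [mul_pow]; ring
    have hcont : Tendsto (fun x : ℝ => -Complex.log (1 - x * z)) (𝓝 1)
        (𝓝 (-Complex.log (1 - z))) := by
      have hre : 0 < (1 - z).re := by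
        have : z.re < 1 := by
          rcases lt_or_eq_of_le (Complex.re_le_norm z) with h | h
          · simpa [hz] using h
          · exfalso
            apply hz1
            have him : z.im = 0 := by
              have h2 := Complex.sq_norm z
              rw [Complex.normSq_apply, ← h] at h2
              have h3 : z.im ^ 2 = 0 := by nlinarith
              exact pow_eq_zero_iff two_ne_zero |>.mp h3
            have hre : z.re = 1 := by rw [hz] at h; linarith
            exact Complex.ext hre (by simp [him])
        simpa [Complex.sub_re] using this
      have h1 : Tendsto (fun x : ℝ => 1 - (x:ℂ) * z) (𝓝 1) (𝓝 (1 - z)) := by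
        have hcz : Continuous (fun x : ℝ => 1 - (x:ℂ) * z) := by fun_prop
        simpa using hcz.tendsto 1
      exact (h1.clog (Complex.mem_slitPlane_iff.mpr (Or.inl hre))).neg
    have h2 : Tendsto (fun x : ℝ => -Complex.log (1 - x * z)) (𝓝[<] 1)
        (𝓝 (-Complex.log (1 - z))) := hcont.mono_left nhdsWithin_le_nhds
    exact Filter.Tendsto.congr' heq h2
  have : l = -Complex.log (1 - z) := tendsto_nhds_unique habel key
  rwa [this] at hl


open Filter Topology Complex Finset

lemma two_pi_I_ne_zero' : (2 * (Real.pi : ℂ) * Complex.I) ≠ 0 := by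
  simp [Real.pi_ne_zero, Complex.I_ne_zero]

lemma exp_eq_one_iff_dvd (q : ℕ) (hq : 0 < q) (a : ℤ) :
    Complex.exp (2 * (Real.pi : ℂ) * Complex.I * a / q) = 1 ↔ (q : ℤ) ∣ a := by
  have hq0 : (q : ℂ) ≠ 0 := Nat.cast_ne_zero.mpr hq.ne'
  rw [Complex.exp_eq_one_iff]
  constructor
  · rintro ⟨k, hk⟩
    refine ⟨k, ?_⟩
    have h2 : (2 * (Real.pi : ℂ) * Complex.I) * a
        = (2 * (Real.pi : ℂ) * Complex.I) * (k * q) := by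
      field_simp at hk
      linear_combination (2 * (Real.pi : ℂ) * Complex.I) * hk
    have h3 := mul_left_cancel₀ two_pi_I_ne_zero' h2
    have h4 : a = k * (q : ℤ) := by exact_mod_cast h3
    rw [h4, Int.mul_comm]
  · rintro ⟨k, hk⟩
    refine ⟨k, ?_⟩
    rw [hk]
    push_cast
    field_simp

lemma exp_pow_q (q : ℕ) (hq : 0 < q) (a : ℤ) :
    Complex.exp (2 * (Real.pi : ℂ) * Complex.I * a / q) ^ q = 1 := by
  have hq0 : (q : ℂ) ≠ 0 := Nat.cast_ne_zero.mpr hq.ne'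
  rw [← Complex.exp_nat_mul]
  rw [show (q : ℂ) * (2 * (Real.pi : ℂ) * Complex.I * a / q)
      = (a : ℂ) * (2 * (Real.pi : ℂ) * Complex.I) by field_simp]
  exact Complex.exp_int_mul_two_pi_mul_I a

lemma per_int (q : ℕ) (f : ℤ → ℂ) (hper : ∀ n : ℤ, f (n + q) = f n) :
    ∀ (k n : ℤ), f (n + k * q) = f n := by
  intro k
  induction k using Int.induction_on with
  | zero => simp
  | succ k ih =>
    intro n
    have h1 : n + (k + 1 : ℤ) * q = (n + k * q) + q := by ring
    rw [h1, hper, ih]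
  | pred k ih =>
    intro n
    have h := hper (n + (-(k : ℤ) - 1) * q)
    rw [show n + (-(k : ℤ) - 1) * q + q = n + (-(k : ℤ)) * q by ring, ih] at h
    exact h.symm

lemma fourier_inv (q : ℕ) (hq : 0 < q) (f : ℤ → ℂ)
    (hper : ∀ n : ℤ, f (n + q) = f n)
    (hsum : ∑ r ∈ Finset.Icc (1 : ℤ) q, f r = 0) (g : ℤ → ℂ)
    (hg : ∀ s : ℤ, g s = (1 / (q : ℂ)) * ∑ r ∈ Finset.Icc (1 : ℤ) q,
      f r * Complex.exp (-2 * (Real.pi : ℂ) * Complex.I * r * s / q)) (n : ℤ) :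
    f n = ∑ s ∈ Finset.Icc (1 : ℤ) ((q : ℤ) - 1),
      g s * Complex.exp (2 * (Real.pi : ℂ) * Complex.I * s * n / q) := by
  have hq0 : (q : ℂ) ≠ 0 := Nat.cast_ne_zero.mpr hq.ne'
  have hg0 : g 0 = 0 := by
    rw [hg]
    simp only [Int.cast_zero, mul_zero, zero_div, Complex.exp_zero, mul_one]
    rw [hsum, mul_zero]
  -- extend to Icc 0 (q-1)
  have hins : Finset.Icc (0 : ℤ) ((q : ℤ) - 1)
      = insert (0 : ℤ) (Finset.Icc (1 : ℤ) ((q : ℤ) - 1)) := by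
    ext x; simp; omega
  have hext : ∑ s ∈ Finset.Icc (1 : ℤ) ((q : ℤ) - 1),
      g s * Complex.exp (2 * (Real.pi : ℂ) * Complex.I * s * n / q)
      = ∑ s ∈ Finset.Icc (0 : ℤ) ((q : ℤ) - 1),
      g s * Complex.exp (2 * (Real.pi : ℂ) * Complex.I * s * n / q) := by
    rw [hins, Finset.sum_insert (by simp), hg0, zero_mul, zero_add]
  rw [hext]
  -- substitute hg and swap sums
  have hswap : ∑ s ∈ Finset.Icc (0 : ℤ) ((q : ℤ) - 1),
      g s * Complex.exp (2 * (Real.pi : ℂ) * Complex.I * s * n / q)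
      = (1 / (q : ℂ)) * ∑ r ∈ Finset.Icc (1 : ℤ) (q : ℤ), f r *
        ∑ s ∈ Finset.Icc (0 : ℤ) ((q : ℤ) - 1),
          Complex.exp (2 * (Real.pi : ℂ) * Complex.I * (n - r) * s / q) := by
    calc ∑ s ∈ Finset.Icc (0 : ℤ) ((q : ℤ) - 1),
        g s * Complex.exp (2 * (Real.pi : ℂ) * Complex.I * s * n / q)
        = ∑ s ∈ Finset.Icc (0 : ℤ) ((q : ℤ) - 1), ∑ r ∈ Finset.Icc (1 : ℤ) (q : ℤ),
          (1 / (q : ℂ)) * (f r *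
            Complex.exp (2 * (Real.pi : ℂ) * Complex.I * (n - r) * s / q)) := by
          refine Finset.sum_congr rfl fun s _ => ?_
          rw [hg, Finset.mul_sum, Finset.sum_mul]
          refine Finset.sum_congr rfl fun r _ => ?_
          rw [show 2 * (Real.pi : ℂ) * Complex.I * (n - r) * s / q
              = -2 * (Real.pi : ℂ) * Complex.I * r * s / q
                + 2 * (Real.pi : ℂ) * Complex.I * s * n / q by ring,
            Complex.exp_add]
          ring
      _ = ∑ r ∈ Finset.Icc (1 : ℤ) (q : ℤ), ∑ s ∈ Finset.Icc (0 : ℤ) ((q : ℤ) - 1),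
          (1 / (q : ℂ)) * (f r *
            Complex.exp (2 * (Real.pi : ℂ) * Complex.I * (n - r) * s / q)) :=
        Finset.sum_comm
      _ = _ := by
          rw [Finset.mul_sum]
          refine Finset.sum_congr rfl fun r _ => ?_
          rw [← Finset.mul_sum, ← Finset.mul_sum]
  rw [hswap]
  -- evaluate inner sum
  have hrange : Finset.Icc (0 : ℤ) ((q : ℤ) - 1)
      = Finset.map ⟨Nat.cast, Nat.cast_injective⟩ (Finset.range q) := by
    ext x
    simp only [Finset.mem_Icc, Finset.mem_map, Finset.mem_range,
      Function.Embedding.coeFn_mk]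
    constructor
    · rintro ⟨h1, h2⟩
      exact ⟨x.toNat, by omega, by omega⟩
    · rintro ⟨m, hm, rfl⟩
      omega
  have hinner : ∀ r ∈ Finset.Icc (1 : ℤ) (q : ℤ),
      ∑ s ∈ Finset.Icc (0 : ℤ) ((q : ℤ) - 1),
        Complex.exp (2 * (Real.pi : ℂ) * Complex.I * (n - r) * s / q)
      = if (q : ℤ) ∣ (n - r) then (q : ℂ) else 0 := by
    intro r _
    set u : ℂ := Complex.exp (2 * (Real.pi : ℂ) * Complex.I * ((n - r : ℤ) : ℂ) / q) with hu
    have hsum_u : ∑ s ∈ Finset.Icc (0 : ℤ) ((q : ℤ) - 1),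
        Complex.exp (2 * (Real.pi : ℂ) * Complex.I * (n - r) * s / q)
        = ∑ s ∈ Finset.range q, u ^ s := by
      rw [hrange, Finset.sum_map]
      refine Finset.sum_congr rfl fun s _ => ?_
      simp only [Function.Embedding.coeFn_mk]
      rw [hu, ← Complex.exp_nat_mul]
      congr 1
      push_cast
      ring
    rw [hsum_u]
    by_cases hdvd : (q : ℤ) ∣ (n - r)
    · have hu1 : u = 1 := (exp_eq_one_iff_dvd q hq (n - r)).mpr hdvd
      simp [hu1, hdvd]
    · have hu1 : u ≠ 1 := fun h => hdvd ((exp_eq_one_iff_dvd q hq (n - r)).mp h)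
      rw [geom_sum_eq hu1, hu, exp_pow_q q hq (n - r)]
      simp [hdvd]
  rw [Finset.sum_congr rfl fun r hr => by rw [hinner r hr]]
  -- only one r contributes
  set rn : ℤ := (n - 1) % q + 1 with hrn
  have hq' : (0 : ℤ) < q := by exact_mod_cast hq
  have hmem : rn ∈ Finset.Icc (1 : ℤ) (q : ℤ) := by
    simp only [Finset.mem_Icc]
    have h1 := Int.emod_nonneg (n - 1) hq'.ne'
    have h2 := Int.emod_lt_of_pos (n - 1) hq'
    omega
  have hdvd_rn : (q : ℤ) ∣ (n - rn) := by
    refine ⟨(n - 1) / q, ?_⟩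
    have := Int.mul_ediv_add_emod (n - 1) q
    omega
  have hsingle : ∑ r ∈ Finset.Icc (1 : ℤ) (q : ℤ),
      f r * (if (q : ℤ) ∣ (n - r) then (q : ℂ) else 0) = f rn * q := by
    rw [Finset.sum_eq_single_of_mem rn hmem]
    · rw [if_pos hdvd_rn]
    · intro r hr hne
      rw [Finset.mem_Icc] at hr
      rw [if_neg, mul_zero]
      intro hdvd
      have hd : (q : ℤ) ∣ (r - rn) := by
        have := dvd_sub hdvd hdvd_rn
        rw [show n - r - (n - rn) = -(r - rn) by ring] at this
        exact (dvd_neg.mp this)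
      obtain ⟨k, hk⟩ := hd
      have hrn_mem : 1 ≤ rn ∧ rn ≤ (q : ℤ) := Finset.mem_Icc.mp hmem
      have hk0 : k ≠ 0 := by
        intro h; apply hne; rw [h, mul_zero] at hk; omega
      have h1 : 1 ≤ |k| := Int.one_le_abs hk0
      have h2 : |r - rn| ≤ (q : ℤ) - 1 := by
        rw [abs_le]; omega
      rw [hk, abs_mul, abs_of_nonneg hq'.le] at h2
      nlinarith
  rw [hsingle]
  have hfn : f rn = f n := by
    have := per_int q f hper ((n - 1) / q) rn
    rw [show rn + (n - 1) / (q : ℤ) * q = n from by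
      rw [mul_comm]
      have h := Int.mul_ediv_add_emod (n - 1) (q : ℤ); omega] at this
    exact this.symm
  rw [hfn]
  field_simp






/-- For `f : ℤ → ℂ` `q`-periodic with vanishing sum over a period and discrete
Fourier transform `g`, the series `∑_{n=1}^∞ f(n)/n` converges to
`-∑_{s=1}^{q-1} g(s) log(1 - e^{2πi s/q})`; in particular `L(1,f) = 0` iff
`∑_{s=1}^{q-1} g(s) log(1 - e^{2πi s/q}) = 0`. -/
theorem LOne_eq_neg_sum_g_log (q : ℕ) (hq : 0 < q) (f : ℤ → ℂ)
    (hper : ∀ n : ℤ, f (n + q) = f n)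
    (hsum : ∑ r ∈ Finset.Icc (1 : ℤ) q, f r = 0) (g : ℤ → ℂ)
    (hg : ∀ s : ℤ, g s = (1 / (q : ℂ)) * ∑ r ∈ Finset.Icc (1 : ℤ) q,
      f r * Complex.exp (-2 * (Real.pi : ℂ) * Complex.I * r * s / q)) :
    Tendsto (fun N : ℕ => ∑ n ∈ Finset.range N, f (n + 1) / (n + 1)) atTop
      (𝓝 (-∑ s ∈ Finset.Icc (1 : ℤ) (q - 1),
        g s * Complex.log (1 - Complex.exp (2 * (Real.pi : ℂ) * Complex.I * s / q)))) ∧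
    (∀ L : ℂ, Tendsto (fun N : ℕ => ∑ n ∈ Finset.range N, f (n + 1) / (n + 1)) atTop (𝓝 L) →
      (L = 0 ↔ ∑ s ∈ Finset.Icc (1 : ℤ) (q - 1),
        g s * Complex.log (1 - Complex.exp (2 * (Real.pi : ℂ) * Complex.I * s / q)) = 0)) := by
  have hq0 : (q : ℂ) ≠ 0 := Nat.cast_ne_zero.mpr hq.ne'
  set z : ℤ → ℂ := fun s => Complex.exp (2 * (Real.pi : ℂ) * Complex.I * s / q) with hz
  have hz_props : ∀ s ∈ Finset.Icc (1 : ℤ) ((q : ℤ) - 1), ‖z s‖ = 1 ∧ z s ≠ 1 := by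
    intro s hs
    rw [Finset.mem_Icc] at hs
    constructor
    · simp only [hz]
      rw [show 2 * (Real.pi : ℂ) * Complex.I * s / q
          = ((2 * Real.pi * s / q : ℝ) : ℂ) * Complex.I by push_cast; ring]
      rw [Complex.norm_exp_ofReal_mul_I]
    · intro h
      have := (exp_eq_one_iff_dvd q hq s).mp (by exact h)
      obtain ⟨k, hk⟩ := this
      have hq' : (0 : ℤ) < q := by exact_mod_cast hq
      rcases le_or_gt k 0 with h1 | h1
      · nlinarith
      · nlinarith
  -- the main limit
  have hmain : Tendsto (fun N : ℕ => ∑ n ∈ Finset.range N, f (n + 1) / (n + 1)) atTop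
      (𝓝 (-∑ s ∈ Finset.Icc (1 : ℤ) ((q : ℤ) - 1),
        g s * Complex.log (1 - z s))) := by
    have hterm : ∀ s ∈ Finset.Icc (1 : ℤ) ((q : ℤ) - 1),
        Tendsto (fun N : ℕ => ∑ n ∈ Finset.range N, g s * (z s ^ (n + 1) / (n + 1))) atTop
          (𝓝 (g s * -Complex.log (1 - z s))) := by
      intro s hs
      obtain ⟨h1, h2⟩ := hz_props s hs
      have := (tendsto_log_series h1 h2).const_mul (g s)
      convert this using 2 with N
      rw [Finset.mul_sum]
    have htot := tendsto_finset_sum (Finset.Icc (1 : ℤ) ((q : ℤ) - 1)) hterm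
    have heq : ∀ N : ℕ, ∑ s ∈ Finset.Icc (1 : ℤ) ((q : ℤ) - 1),
        ∑ n ∈ Finset.range N, g s * (z s ^ (n + 1) / (n + 1))
        = ∑ n ∈ Finset.range N, f (n + 1) / (n + 1) := by
      intro N
      rw [Finset.sum_comm]
      refine Finset.sum_congr rfl fun n _ => ?_
      rw [fourier_inv q hq f hper hsum g hg ((n : ℤ) + 1), Finset.sum_div]
      refine Finset.sum_congr rfl fun s _ => ?_
      have hzpow : z s ^ (n + 1)
          = Complex.exp (2 * (Real.pi : ℂ) * Complex.I * s * ((n : ℤ) + 1) / q) := by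
        simp only [hz]
        rw [← Complex.exp_nat_mul]
        congr 1
        push_cast
        ring
      rw [hzpow]
      push_cast
      ring
    have := htot.congr heq
    convert this using 2
    rw [← Finset.sum_neg_distrib]
    exact Finset.sum_congr rfl fun s _ => by ring
  constructor
  · exact hmain
  · intro L hL
    have hLeq : L = -∑ s ∈ Finset.Icc (1 : ℤ) ((q : ℤ) - 1),
        g s * Complex.log (1 - z s) := tendsto_nhds_unique hL hmain
    rw [hLeq, neg_eq_zero]
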